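/- In module RandPhase, suppose that in round t node v_max (the last node to reset its flag) sets flag := 0, with all flags 0 thereafter. Then for every 0 ≤ d ≤ D: (1) all edges are valid at time t + d; (2) v.step^{t+d} ≥ d for every node v; and (3) v.step^{t+d} ≤ max{d, dist_G(v_max, v)} for every node v. Consequently, all nodes set step = D + 1 concurrently in round t + D. -/

import Mathlib

set_option autoImplicit false

/-- in module RandPhase, suppose that in round `t` node `v_max` (the last
node to reset its flag) sets `flag := 0`, so that from round `t` on every node `v`
updates `step` by `step := min {step u : u ∈ N⁺(v)} + 1` whenever this minimum is
`< D + 2`. Assume all edges are valid at time `t` and `step t v_max = 0`. Then for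
every `0 ≤ d ≤ D`: (1) all edges are valid at time `t + d`; (2) `d ≤ step (t+d) v` for
every node `v`; (3) `step (t+d) v ≤ max d (dist v_max v)` for every node `v`; and
consequently all nodes set `step = D + 1` concurrently in round `t + D`. -/
theorem stmt_16 {V : Type} [Fintype V] (G : SimpleGraph V) (hconn : G.Connected)
    (D : ℕ) (hdiam : ∀ u v : V, G.dist u v ≤ D)
    (step : ℕ → V → ℕ)
    (vmax : V) (t : ℕ)
    (hupd : ∀ s, t ≤ s → ∀ v : V, ∀ m : ℕ,
      ((∀ u : V, (u = v ∨ G.Adj u v) → m ≤ step s u) ∧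
        (∃ u : V, (u = v ∨ G.Adj u v) ∧ step s u = m)) →
      m < D + 2 → step (s + 1) v = m + 1)
    (hvalid : ∀ u v : V, G.Adj u v → step t u ≤ step t v + 1 ∧ step t v ≤ step t u + 1)
    (h0 : step t vmax = 0) :
    (∀ d ≤ D,
      (∀ u v : V, G.Adj u v →
        step (t + d) u ≤ step (t + d) v + 1 ∧ step (t + d) v ≤ step (t + d) u + 1) ∧
      (∀ v : V, d ≤ step (t + d) v) ∧
      (∀ v : V, step (t + d) v ≤ max d (G.dist vmax v))) ∧
    (∀ v : V, step (t + D + 1) v = D + 1) := by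
  -- minimizer over closed neighborhood
  have hmin : ∀ s : ℕ, t ≤ s → ∀ v : V, ∃ u₀ : V,
      (u₀ = v ∨ G.Adj u₀ v) ∧ (∀ u : V, (u = v ∨ G.Adj u v) → step s u₀ ≤ step s u) ∧
      (step s u₀ < D + 2 → step (s + 1) v = step s u₀ + 1) := by
    intro s hs v
    classical
    obtain ⟨u₀, hu₀mem, hu₀min⟩ := Finset.exists_min_image
      (Finset.univ.filter (fun u => u = v ∨ G.Adj u v)) (fun u => step s u)
      ⟨v, by simp⟩
    refine ⟨u₀, (Finset.mem_filter.mp hu₀mem).2, ?_, ?_⟩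
    · intro u hu
      exact hu₀min u (Finset.mem_filter.mpr ⟨Finset.mem_univ u, hu⟩)
    · intro hlt
      exact hupd s hs v (step s u₀)
        ⟨fun u hu => hu₀min u (Finset.mem_filter.mpr ⟨Finset.mem_univ u, hu⟩),
         ⟨u₀, (Finset.mem_filter.mp hu₀mem).2, rfl⟩⟩ hlt
  -- validity implies distance bound from vmax
  have hwalk : ∀ s : ℕ,
      (∀ u v : V, G.Adj u v → step s u ≤ step s v + 1 ∧ step s v ≤ step s u + 1) →
      ∀ (a b : V) (p : G.Walk a b), step s b ≤ step s a + p.length := by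
    intro s hv a b p
    induction p with
    | nil => simp
    | cons h q ih =>
      rename_i x y z
      calc step s z ≤ step s y + q.length := ih
        _ ≤ (step s x + 1) + q.length := by
            have := (hv x y h).2; omega
        _ = step s x + (SimpleGraph.Walk.cons h q).length := by
            simp [SimpleGraph.Walk.length_cons]; ring
  have key : ∀ d : ℕ, d ≤ D →
      (∀ u v : V, G.Adj u v →
        step (t + d) u ≤ step (t + d) v + 1 ∧ step (t + d) v ≤ step (t + d) u + 1) ∧
      (∀ v : V, d ≤ step (t + d) v) ∧
      (∀ v : V, step (t + d) v ≤ max d (G.dist vmax v)) := by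
    intro d
    induction d with
    | zero =>
      intro _
      refine ⟨by simpa using hvalid, fun v => Nat.zero_le _, ?_⟩
      intro v
      obtain ⟨p, hp⟩ := hconn.exists_walk_length_eq_dist vmax v
      have := hwalk t hvalid vmax v p
      simp only [Nat.add_zero]
      omega
    | succ d ih =>
      intro hd
      obtain ⟨hv, hl, hu⟩ := ih (Nat.le_of_succ_le hd)
      have hs : t ≤ t + d := Nat.le_add_right t d
      -- step value at t+d+1 via minimizer
      have hstep : ∀ v : V, ∃ u₀ : V, (u₀ = v ∨ G.Adj u₀ v) ∧
          (∀ u : V, (u = v ∨ G.Adj u v) → step (t + d) u₀ ≤ step (t + d) u) ∧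
          step (t + d + 1) v = step (t + d) u₀ + 1 := by
        intro v
        obtain ⟨u₀, h1, h2, h3⟩ := hmin (t + d) hs v
        have hub : step (t + d) u₀ ≤ step (t + d) v := h2 v (Or.inl rfl)
        have : step (t + d) v ≤ max d (G.dist vmax v) := hu v
        have hdd : G.dist vmax v ≤ D := hdiam vmax v
        refine ⟨u₀, h1, h2, h3 (by omega)⟩
      have heq : t + (d + 1) = t + d + 1 := by omega
      rw [heq]
      refine ⟨?_, ?_, ?_⟩
      · -- validity
        intro u v hadj
        obtain ⟨u₀, hu1, hu2, hu3⟩ := hstep u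
        obtain ⟨v₀, hv1, hv2, hv3⟩ := hstep v
        have h1 : step (t + d) u₀ ≤ step (t + d) v₀ + 1 := by
          have hle : step (t + d) u₀ ≤ step (t + d) v := hu2 v (Or.inr (G.adj_symm hadj))
          have : step (t + d) v ≤ step (t + d) v₀ + 1 := by
            rcases hv1 with rfl | hadj'
            · omega
            · exact (hv v₀ v hadj').2
          omega
        have h2 : step (t + d) v₀ ≤ step (t + d) u₀ + 1 := by
          have hle : step (t + d) v₀ ≤ step (t + d) u := hv2 u (Or.inr hadj)
          have : step (t + d) u ≤ step (t + d) u₀ + 1 := by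
            rcases hu1 with rfl | hadj'
            · omega
            · exact (hv u₀ u hadj').2
          omega
        omega
      · -- lower bound
        intro v
        obtain ⟨u₀, h1, h2, h3⟩ := hstep v
        have := hl u₀
        omega
      · -- upper bound
        intro v
        obtain ⟨u₀, h1, h2, h3⟩ := hstep v
        by_cases hcase : d + 1 ≤ G.dist vmax v
        · -- find neighbor of v closer to vmax
          obtain ⟨p, hp⟩ := hconn.exists_walk_length_eq_dist vmax v
          have hq : p.reverse.length = G.dist vmax v := by
            rw [SimpleGraph.Walk.length_reverse]; exact hp
          cases hrev : p.reverse with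
          | nil =>
            rw [hrev] at hq
            simp at hq
            have : G.dist vmax vmax = 0 := SimpleGraph.dist_self
            omega
          | cons hadj r =>
            rename_i w
            rw [hrev] at hq
            simp only [SimpleGraph.Walk.length_cons] at hq
            have hdw : G.dist vmax w ≤ r.length := by
              have := SimpleGraph.dist_le r.reverse
              rwa [SimpleGraph.Walk.length_reverse] at this
            have hle : step (t + d) u₀ ≤ step (t + d) w :=
              h2 w (Or.inr (G.adj_symm hadj))
            have hw2 : step (t + d) w ≤ max d (G.dist vmax w) := hu w
            have : max d (G.dist vmax w) ≤ G.dist vmax v - 1 := by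
              simp only [max_le_iff]
              omega
            have hmax : d + 1 ≤ max (d + 1) (G.dist vmax v) := le_max_left _ _
            have : max (d + 1) (G.dist vmax v) = G.dist vmax v := max_eq_right hcase
            omega
        · have hle : step (t + d) u₀ ≤ step (t + d) v := h2 v (Or.inl rfl)
          have := hu v
          have : max d (G.dist vmax v) = d := max_eq_left (by omega)
          omega
  refine ⟨key, ?_⟩
  obtain ⟨hv, hl, hu⟩ := key D le_rfl
  have hall : ∀ v : V, step (t + D) v = D := by
    intro v
    have h1 := hl v
    have h2 := hu v
    have h3 := hdiam vmax v
    have : max D (G.dist vmax v) = D := max_eq_left h3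
    omega
  intro v
  obtain ⟨u₀, h1, h2, h3⟩ := hmin (t + D) (Nat.le_add_right t D) v
  rw [hall u₀] at h3
  exact h3 (by omega)
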